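/- Let C be the Cantor-integer sequence for strictly increasing f with f(0)=0, f(m)>m, and α = log(f(m)+1)/log(m+1). Then the set {C(n)/n^α : n ≥ 1} is dense in the closed interval [inf_{n≥1} C(n)/n^α, sup_{n≥1} C(n)/n^α]. -/

import Mathlib

def cantorC (m : ℕ) (f : ℕ → ℕ) (n : ℕ) : ℕ :=
  Nat.ofDigits (f m + 1) ((Nat.digits (m + 1) n).map f)

lemma cantorC_zero (m : ℕ) (f : ℕ → ℕ) : cantorC m f 0 = 0 := by simp [cantorC]

lemma cantorC_key (m : ℕ) (hm : 1 ≤ m) (f : ℕ → ℕ) (hf0 : f 0 = 0) (q d : ℕ) (hd : d ≤ m) :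
    cantorC m f ((m + 1) * q + d) = (f m + 1) * cantorC m f q + f d := by
  rcases Nat.eq_zero_or_pos ((m + 1) * q + d) with h | h
  · have hq : q = 0 := by
      rcases Nat.eq_zero_or_pos q with h' | h'
      · exact h'
      · exfalso; nlinarith
    have hd0 : d = 0 := by omega
    subst hq; subst hd0
    simp [cantorC_zero, hf0]
  · have hmod : ((m + 1) * q + d) % (m + 1) = d := by
      rw [Nat.mul_add_mod]
      exact Nat.mod_eq_of_lt (by omega)
    have hdiv : ((m + 1) * q + d) / (m + 1) = q := by
      rw [Nat.mul_add_div (show 0 < m + 1 by omega) q d]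
      simp [Nat.div_eq_of_lt (show d < m + 1 by omega)]
    have hdig : Nat.digits (m + 1) ((m + 1) * q + d) = d :: Nat.digits (m + 1) q := by
      have e := Nat.digits_def' (b := m + 1) (by omega) h
      rw [hmod, hdiv] at e
      exact e
    show Nat.ofDigits (f m + 1) _ = _
    rw [hdig]
    simp only [List.map_cons, Nat.ofDigits_cons]
    show f d + (f m + 1) * cantorC m f q = _
    ring

lemma cantorC_lt_succ (m : ℕ) (hm : 1 ≤ m) (f : ℕ → ℕ)
    (hf : ∀ i j, i < j → j ≤ m → f i < f j) (hf0 : f 0 = 0) :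
    ∀ n, cantorC m f n < cantorC m f (n + 1) := by
  intro n
  induction n using Nat.strong_induction_on with
  | _ n ih =>
    obtain ⟨q, d, hd, hn⟩ : ∃ q d, d ≤ m ∧ n = (m + 1) * q + d := by
      have h1 := Nat.mod_lt n (show 0 < m + 1 by omega)
      have h2 := Nat.div_add_mod n (m + 1)
      exact ⟨n / (m + 1), n % (m + 1), by omega, by omega⟩
    rcases lt_or_eq_of_le hd with hdm | hdm
    · have h1 : n + 1 = (m + 1) * q + (d + 1) := by omega
      rw [h1, hn, cantorC_key m hm f hf0 q d hd, cantorC_key m hm f hf0 q (d + 1) hdm]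
      have := hf d (d + 1) (Nat.lt_succ_self d) hdm
      omega
    · subst d
      have h1 : n + 1 = (m + 1) * (q + 1) + 0 := by rw [hn]; ring
      rw [h1, hn, cantorC_key m hm f hf0 q m le_rfl, cantorC_key m hm f hf0 (q + 1) 0 (by omega)]
      have hq : q < n := by
        have : q ≤ (m + 1) * q := Nat.le_mul_of_pos_left q (by omega)
        omega
      have h2 := ih q hq
      rw [hf0]
      nlinarith

lemma cantorC_mono (m : ℕ) (hm : 1 ≤ m) (f : ℕ → ℕ)
    (hf : ∀ i j, i < j → j ≤ m → f i < f j) (hf0 : f 0 = 0) :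
    StrictMono (cantorC m f) :=
  strictMono_nat_of_lt_succ (cantorC_lt_succ m hm f hf hf0)

lemma f_le_fm (m : ℕ) (f : ℕ → ℕ) (hf : ∀ i j, i < j → j ≤ m → f i < f j) (d : ℕ) (hd : d ≤ m) :
    f d ≤ f m := by
  rcases lt_or_eq_of_le hd with h | h
  · exact (hf d m h le_rfl).le
  · rw [h]

lemma cantorC_upper (m : ℕ) (hm : 1 ≤ m) (f : ℕ → ℕ)
    (hf : ∀ i j, i < j → j ≤ m → f i < f j) (hf0 : f 0 = 0) :
    ∀ k n, n < (m + 1) ^ (k + 1) → cantorC m f n + 1 ≤ (f m + 1) ^ (k + 1) := by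
  intro k
  induction k with
  | zero =>
    intro n hn
    simp only [zero_add, pow_one] at hn ⊢
    have h1 : cantorC m f n = f n := by
      have := cantorC_key m hm f hf0 0 n (by omega)
      simpa [cantorC_zero] using this
    have h2 : f n ≤ f m := f_le_fm m f hf n (by omega)
    omega
  | succ k ih =>
    intro n hn
    obtain ⟨q, d, hd, hqlt, hn'⟩ : ∃ q d, d ≤ m ∧ q < (m + 1) ^ (k + 1) ∧ n = (m + 1) * q + d := by
      have h1 := Nat.mod_lt n (show 0 < m + 1 by omega)
      have h2 := Nat.div_add_mod n (m + 1)
      refine ⟨n / (m + 1), n % (m + 1), by omega, ?_, by omega⟩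
      rw [Nat.div_lt_iff_lt_mul (by omega)]
      calc n < (m + 1) ^ (k + 2) := hn
        _ = (m + 1) ^ (k + 1) * (m + 1) := by ring
    have hkey := cantorC_key m hm f hf0 q d hd
    have hihq := ih q hqlt
    have hfd : f d ≤ f m := f_le_fm m f hf d hd
    rw [hn', hkey]
    have : (f m + 1) * (cantorC m f q + 1) ≤ (f m + 1) * (f m + 1) ^ (k + 1) :=
      Nat.mul_le_mul_left _ hihq
    calc (f m + 1) * cantorC m f q + f d + 1 ≤ (f m + 1) * (cantorC m f q + 1) := by nlinarith
      _ ≤ (f m + 1) * (f m + 1) ^ (k + 1) := this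
      _ = (f m + 1) ^ (k + 2) := by ring

lemma cantorC_pow (m : ℕ) (hm : 1 ≤ m) (f : ℕ → ℕ) (hf0 : f 0 = 0) (k : ℕ) :
    cantorC m f ((m + 1) ^ k) = f 1 * (f m + 1) ^ k := by
  induction k with
  | zero =>
    have := cantorC_key m hm f hf0 0 1 hm
    simpa [cantorC_zero] using this
  | succ k ih =>
    have h1 : (m + 1) ^ (k + 1) = (m + 1) * (m + 1) ^ k + 0 := by ring
    rw [h1, cantorC_key m hm f hf0 _ 0 (by omega), ih, hf0]
    ring

lemma rpow_mvt (α : ℝ) (hα1 : 1 ≤ α) (x : ℝ) (hx : 1 ≤ x) :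
    (x + 1) ^ α - x ^ α ≤ α * (x + 1) ^ α / (x + 1) := by
  have hd : ∀ t : ℝ, HasDerivAt (fun s : ℝ => s ^ α) (α * t ^ (α - 1)) t := fun t =>
    Real.hasDerivAt_rpow_const (Or.inr hα1)
  obtain ⟨c, hc, hceq⟩ :=
    exists_hasDerivAt_eq_slope (fun s : ℝ => s ^ α) (fun t => α * t ^ (α - 1))
      (by linarith : x < x + 1)
      (fun t _ => (hd t).continuousAt.continuousWithinAt) (fun t _ => hd t)
  have hden : x + 1 - x = 1 := by ring
  rw [hden, div_one] at hceq
  have hc0 : (0:ℝ) ≤ c := by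
    have := hc.1
    linarith
  have hcle : c ^ (α - 1) ≤ (x + 1) ^ (α - 1) :=
    Real.rpow_le_rpow hc0 (le_of_lt hc.2) (by linarith)
  have he : (x + 1) ^ (α - 1) = (x + 1) ^ α / (x + 1) := by
    rw [Real.rpow_sub (by linarith : (0:ℝ) < x + 1), Real.rpow_one]
  have : (x + 1) ^ α - x ^ α = α * c ^ (α - 1) := hceq.symm
  rw [this]
  rw [he] at hcle
  calc α * c ^ (α - 1) ≤ α * ((x + 1) ^ α / (x + 1)) :=
        mul_le_mul_of_nonneg_left hcle (by linarith)
    _ = α * (x + 1) ^ α / (x + 1) := by ring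


theorem cantor_integers_dense (m : ℕ) (hm : 1 ≤ m) (f : ℕ → ℕ)
    (hf : ∀ i j, i < j → j ≤ m → f i < f j) (hf0 : f 0 = 0) (hfm : m < f m)
    (α : ℝ) (hα : α = Real.log (f m + 1) / Real.log (m + 1)) :
    Set.Icc (sInf {x : ℝ | ∃ n : ℕ, 1 ≤ n ∧ x = (cantorC m f n : ℝ) / (n : ℝ) ^ α})
        (sSup {x : ℝ | ∃ n : ℕ, 1 ≤ n ∧ x = (cantorC m f n : ℝ) / (n : ℝ) ^ α}) ⊆
      closure {x : ℝ | ∃ n : ℕ, 1 ≤ n ∧ x = (cantorC m f n : ℝ) / (n : ℝ) ^ α} := by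
  classical
  have hb1 : (1:ℝ) < (m:ℝ) + 1 := by
    have : (1:ℝ) ≤ (m:ℝ) := by exact_mod_cast hm
    linarith
  have hβb : (m:ℝ) + 1 < (f m : ℝ) + 1 := by
    have : (m:ℝ) < (f m : ℝ) := by exact_mod_cast hfm
    linarith
  have hβ1 : (1:ℝ) < (f m : ℝ) + 1 := by linarith
  have hlb : 0 < Real.log ((m:ℝ) + 1) := Real.log_pos hb1
  have hα1 : 1 ≤ α := by
    rw [hα, le_div_iff₀ hlb, one_mul]
    exact Real.log_le_log (by linarith) (le_of_lt hβb)
  have hα0 : 0 < α := lt_of_lt_of_le one_pos hα1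
  have hpow0 : ((m:ℝ) + 1) ^ α = (f m : ℝ) + 1 := by
    rw [hα, Real.rpow_def_of_pos (by linarith)]
    have h1 : Real.log ((m:ℝ)+1) * (Real.log ((f m:ℝ)+1) / Real.log ((m:ℝ)+1))
        = Real.log ((f m:ℝ)+1) := by field_simp
    rw [h1, Real.exp_log (by linarith)]
  set β : ℝ := (f m : ℝ) + 1 with hβdef
  set b : ℝ := (m : ℝ) + 1 with hbdef
  have hb0 : (0:ℝ) < b := by rw [hbdef]; linarith
  have hβ0 : (0:ℝ) < β := by rw [hβdef]; linarith
  have hβ1' : (1:ℝ) < β := by rw [hβdef]; linarith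
  have hpowb : b ^ α = β := by rw [hbdef, hβdef]; exact hpow0
  set Qf : ℕ → ℝ := fun n => (cantorC m f n : ℝ) / (n:ℝ) ^ α with hQf
  set Pf : ℕ → ℝ := fun n => ((cantorC m f n : ℝ) + 1) / ((n:ℝ) + 1) ^ α with hPf
  have hCkey : ∀ q d : ℕ, d ≤ m →
      (cantorC m f ((m+1)*q + d) : ℝ) = β * (cantorC m f q : ℝ) + (f d : ℝ) := by
    intro q d hd
    rw [cantorC_key m hm f hf0 q d hd, hβdef]
    push_cast
    ring
  have hscaleR : ∀ t : ℝ, 0 ≤ t → (b * t) ^ α = β * t ^ α := by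
    intro t ht
    rw [Real.mul_rpow (le_of_lt hb0) ht, hpowb]
  have hcast : ∀ n : ℕ, (((m+1) * n : ℕ) : ℝ) = b * (n:ℝ) := by
    intro n; rw [hbdef]; push_cast; ring
  have hQscale : ∀ n : ℕ, Qf ((m+1) * n) = Qf n := by
    intro n
    simp only [hQf]
    have h1 : (cantorC m f ((m+1)*n) : ℝ) = β * (cantorC m f n : ℝ) := by
      have := hCkey n 0 (Nat.zero_le m)
      simpa [hf0] using this
    rw [h1, hcast n, hscaleR _ (Nat.cast_nonneg n),
      mul_div_mul_left _ _ (ne_of_gt hβ0)]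
  have hPm : ∀ n : ℕ, Pf ((m+1)*n + m) = Pf n := by
    intro n
    simp only [hPf]
    have h1 : (cantorC m f ((m+1)*n + m) : ℝ) + 1 = β * ((cantorC m f n : ℝ) + 1) := by
      rw [hCkey n m le_rfl, hβdef]; ring
    have h2 : (((m+1)*n + m : ℕ) : ℝ) + 1 = b * ((n:ℝ) + 1) := by
      rw [hbdef]; push_cast; ring
    rw [h1, h2, hscaleR _ (by positivity), mul_div_mul_left _ _ (ne_of_gt hβ0)]
  have hPQd : ∀ n d : ℕ, d < m → Pf ((m+1)*n + d) ≤ Qf ((m+1)*n + (d+1)) := by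
    intro n d hdm
    simp only [hPf, hQf]
    have hden : (((m+1)*n + d : ℕ) : ℝ) + 1 = (((m+1)*n + (d+1) : ℕ) : ℝ) := by
      push_cast; ring
    rw [hden]
    have hdp : (0:ℝ) < (((m+1)*n + (d+1) : ℕ) : ℝ) := by
      exact_mod_cast (by omega : 0 < (m+1)*n + (d+1))
    apply (div_le_div_iff_of_pos_right (Real.rpow_pos_of_pos hdp α)).mpr
    rw [hCkey n d (le_of_lt hdm), hCkey n (d+1) hdm]
    have h1 : f d < f (d+1) := hf d (d+1) (Nat.lt_succ_self d) hdm
    have h2 : (f d : ℝ) + 1 ≤ (f (d+1) : ℝ) := by exact_mod_cast h1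
    linarith
  have hPQsucc : ∀ n : ℕ, Pf n ≤ Qf (n+1) := by
    intro n
    simp only [hPf, hQf]
    have hden : ((n:ℝ) + 1) = ((n + 1 : ℕ) : ℝ) := by push_cast; ring
    rw [hden]
    have hdp : (0:ℝ) < ((n + 1 : ℕ) : ℝ) := by exact_mod_cast Nat.succ_pos n
    apply (div_le_div_iff_of_pos_right (Real.rpow_pos_of_pos hdp α)).mpr
    have h1 : cantorC m f n + 1 ≤ cantorC m f (n+1) := cantorC_lt_succ m hm f hf hf0 n
    exact_mod_cast h1
  have hlowpow : ∀ n k : ℕ, (m+1)^k ≤ n → β ^ k ≤ (n:ℝ) ^ α := by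
    intro n k hk
    have hb' : ((m+1:ℕ):ℝ) = b := by rw [hbdef]; push_cast; ring
    have h1 : b ^ (k:ℕ) ≤ (n:ℝ) := by
      rw [← hb']
      exact_mod_cast hk
    have h3 : (b ^ (k:ℕ)) ^ α = β ^ k := by
      rw [← Real.rpow_natCast b k, ← Real.rpow_mul (le_of_lt hb0), mul_comm,
        Real.rpow_mul (le_of_lt hb0), hpowb, Real.rpow_natCast]
    have h2 : (b ^ (k:ℕ)) ^ α ≤ (n:ℝ) ^ α :=
      Real.rpow_le_rpow (by positivity) h1 (le_of_lt hα0)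
    rw [← h3]
    exact h2
  have hCup : ∀ n k : ℕ, n < (m+1)^(k+1) → (cantorC m f n : ℝ) + 1 ≤ β ^ (k+1) := by
    intro n k h
    have h1 := cantorC_upper m hm f hf hf0 k n h
    rw [hβdef]
    exact_mod_cast h1
  have hwidth : ∀ n : ℕ, 1 ≤ n → Qf n ≤ Pf n + α * β / (n:ℝ) := by
    intro n hn
    have hn0 : n ≠ 0 := by omega
    have hnR : (1:ℝ) ≤ (n:ℝ) := by exact_mod_cast hn
    set k := Nat.log (m+1) n with hk
    have hk1 : (m+1)^k ≤ n := Nat.pow_log_le_self (m+1) hn0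
    have hk2 : n < (m+1)^(k+1) := Nat.lt_pow_succ_log_self (by omega) n
    have hu := hlowpow n k hk1
    have hCu := hCup n k hk2
    have hu0 : (0:ℝ) < (n:ℝ) ^ α := Real.rpow_pos_of_pos (by linarith) α
    have hv0 : (0:ℝ) < ((n:ℝ)+1) ^ α := Real.rpow_pos_of_pos (by linarith) α
    have hβk0 : (0:ℝ) < β ^ k := pow_pos hβ0 k
    have hmvt := rpow_mvt α hα1 (n:ℝ) hnR
    simp only [hQf, hPf]
    set Cr := (cantorC m f n : ℝ) with hCr
    have hCr0 : (0:ℝ) ≤ Cr := Nat.cast_nonneg _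
    set u := (n:ℝ) ^ α with hudef
    set v := ((n:ℝ)+1) ^ α with hvdef
    have e1 : Cr / u - Cr / v = Cr * (v - u) / (u * v) := by
      field_simp
    have e2 : Cr * (v - u) ≤ Cr * (α * v / ((n:ℝ)+1)) :=
      mul_le_mul_of_nonneg_left hmvt hCr0
    have e2' : Cr * (v - u) / (u * v) ≤ Cr * (α * v / ((n:ℝ)+1)) / (u * v) :=
      (div_le_div_iff_of_pos_right (mul_pos hu0 hv0)).mpr e2
    have e3 : Cr * (α * v / ((n:ℝ)+1)) / (u * v) = Cr * α / (u * ((n:ℝ)+1)) := by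
      field_simp
    have e4 : Cr * α / (u * ((n:ℝ)+1)) ≤ (β^(k+1)) * α / (β^k * ((n:ℝ)+1)) := by
      apply div_le_div₀ (by positivity)
      · exact mul_le_mul_of_nonneg_right (by linarith) (le_of_lt hα0)
      · exact mul_pos hβk0 (by linarith)
      · exact mul_le_mul_of_nonneg_right hu (by linarith)
    have hβk' : β ^ k ≠ 0 := ne_of_gt hβk0
    have e5 : (β^(k+1)) * α / (β^k * ((n:ℝ)+1)) = β * α / ((n:ℝ)+1) := by
      rw [pow_succ, show β^k * β * α = β^k * (β * α) by ring,
        mul_div_mul_left _ _ hβk']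
    have e6 : β * α / ((n:ℝ)+1) ≤ β * α / (n:ℝ) := by
      apply div_le_div₀ (by positivity) le_rfl (by linarith) (by linarith)
    have e7 : Cr / v ≤ (Cr + 1) / v :=
      (div_le_div_iff_of_pos_right hv0).mpr (by linarith)
    have hcomm : β * α / (n:ℝ) = α * β / (n:ℝ) := by ring
    linarith [e1, e2', e3, e4, e5, e6, e7, hcomm]
  have hQle : ∀ n : ℕ, 1 ≤ n → Qf n ≤ β := by
    intro n hn
    have hn0 : n ≠ 0 := by omega
    set k := Nat.log (m+1) n with hk
    have hk1 : (m+1)^k ≤ n := Nat.pow_log_le_self (m+1) hn0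
    have hk2 : n < (m+1)^(k+1) := Nat.lt_pow_succ_log_self (by omega) n
    have hu := hlowpow n k hk1
    have hCu := hCup n k hk2
    have hβk0 : (0:ℝ) < β ^ k := pow_pos hβ0 k
    simp only [hQf]
    calc (cantorC m f n : ℝ) / (n:ℝ) ^ α ≤ β^(k+1) / β^k := by
          apply div_le_div₀ (by positivity) (by linarith) hβk0 hu
      _ = β := by
          rw [pow_succ, mul_comm, mul_div_assoc, div_self (ne_of_gt hβk0), mul_one]
  have hQnonneg : ∀ n : ℕ, 0 ≤ Qf n := by
    intro n
    simp only [hQf]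
    positivity
  have hcov : ∀ n : ℕ, 1 ≤ n → ∀ y : ℝ, Pf n ≤ y → y ≤ Qf n →
      ∃ n', 2 * n ≤ n' ∧ 1 ≤ n' ∧ Pf n' ≤ y ∧ y ≤ Qf n' := by
    intro n hn y hP hQ
    have h0 : y ≤ Qf ((m+1)*n + 0) := by
      rw [Nat.add_zero, hQscale n]; exact hQ
    set D := Nat.findGreatest (fun d => y ≤ Qf ((m+1)*n + d)) m with hD
    have hDle : D ≤ m := Nat.findGreatest_le m
    have hDspec : y ≤ Qf ((m+1)*n + D) := by
      have h1 := Nat.findGreatest_spec (P := fun d => y ≤ Qf ((m+1)*n + d))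
        (Nat.zero_le m) h0
      rw [hD]
      simpa using h1
    have hsize : 2 * n ≤ (m+1)*n + D := by
      have h1 : 2 * n ≤ (m+1) * n := Nat.mul_le_mul_right n (by omega)
      omega
    refine ⟨(m+1)*n + D, hsize, by omega, ?_, hDspec⟩
    rcases lt_or_eq_of_le hDle with hlt | heq
    · have hnot : ¬ y ≤ Qf ((m+1)*n + (D+1)) :=
        Nat.findGreatest_is_greatest (Nat.lt_succ_self D) hlt
      have h2 := hPQd n D hlt
      linarith [not_le.mp hnot]
    · rw [heq, hPm n]
      exact hP
  have hIcc : ∀ n : ℕ, 1 ≤ n → ∀ y : ℝ, Pf n ≤ y → y ≤ Qf n →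
      y ∈ closure {x : ℝ | ∃ n : ℕ, 1 ≤ n ∧ x = (cantorC m f n : ℝ) / (n : ℝ) ^ α} := by
    intro n hn y hP hQ
    have hchain : ∀ j : ℕ, ∃ nj : ℕ, 2 ^ j ≤ nj ∧ 1 ≤ nj ∧ Pf nj ≤ y ∧ y ≤ Qf nj := by
      intro j
      induction j with
      | zero => exact ⟨n, by simpa using hn, hn, hP, hQ⟩
      | succ j ihj =>
        obtain ⟨nj, h1, h2, h3, h4⟩ := ihj
        obtain ⟨n', ha, hb', hc, hd⟩ := hcov nj h2 y h3 h4
        refine ⟨n', ?_, hb', hc, hd⟩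
        calc 2 ^ (j+1) = 2 * 2 ^ j := by ring
          _ ≤ 2 * nj := Nat.mul_le_mul_left 2 h1
          _ ≤ n' := ha
    rw [Metric.mem_closure_iff]
    intro ε hε
    obtain ⟨j, hj⟩ := pow_unbounded_of_one_lt (α * β / ε) (by norm_num : (1:ℝ) < 2)
    obtain ⟨nj, h1, h2, h3, h4⟩ := hchain j
    refine ⟨Qf nj, ⟨nj, h2, by simp only [hQf]⟩, ?_⟩
    have hw := hwidth nj h2
    have h2R : (2:ℝ)^j ≤ (nj:ℝ) := by exact_mod_cast h1
    have hnj0 : (0:ℝ) < (nj:ℝ) := by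
      have : (1:ℝ) ≤ (nj:ℝ) := by exact_mod_cast h2
      linarith
    have h2j0 : (0:ℝ) < (2:ℝ)^j := by positivity
    have hstep1 : α * β / (nj:ℝ) ≤ α * β / (2:ℝ)^j :=
      div_le_div₀ (le_of_lt (mul_pos hα0 hβ0)) le_rfl h2j0 h2R
    have hstep2 : α * β / (2:ℝ)^j < ε := by
      rw [div_lt_iff₀ h2j0]
      rw [div_lt_iff₀ hε] at hj
      linarith [hj, mul_comm ε ((2:ℝ)^j)]
    rw [Real.dist_eq, abs_sub_comm, abs_of_nonneg (by linarith : (0:ℝ) ≤ Qf nj - y)]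
    linarith [hw, h3, hstep1, hstep2]
  intro x hx
  obtain ⟨hx1, hx2⟩ := hx
  by_contra hxc
  have hne : Set.Nonempty {x : ℝ | ∃ n : ℕ, 1 ≤ n ∧ x = (cantorC m f n : ℝ) / (n : ℝ) ^ α} :=
    ⟨Qf 1, 1, le_rfl, by simp only [hQf]⟩
  have hbddA : BddAbove {x : ℝ | ∃ n : ℕ, 1 ≤ n ∧ x = (cantorC m f n : ℝ) / (n : ℝ) ^ α} := by
    refine ⟨β, ?_⟩
    rintro z ⟨n, hn, rfl⟩
    simpa only [hQf] using hQle n hn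
  have hbddB : BddBelow {x : ℝ | ∃ n : ℕ, 1 ≤ n ∧ x = (cantorC m f n : ℝ) / (n : ℝ) ^ α} := by
    refine ⟨0, ?_⟩
    rintro z ⟨n, hn, rfl⟩
    simpa only [hQf] using hQnonneg n
  have hInf_lt : sInf {x : ℝ | ∃ n : ℕ, 1 ≤ n ∧ x = (cantorC m f n : ℝ) / (n : ℝ) ^ α} < x :=
    lt_of_le_of_ne hx1 (fun h => hxc (h ▸ csInf_mem_closure hne hbddB))
  have hlt_Sup : x < sSup {x : ℝ | ∃ n : ℕ, 1 ≤ n ∧ x = (cantorC m f n : ℝ) / (n : ℝ) ^ α} :=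
    lt_of_le_of_ne hx2 (fun h => hxc (h.symm ▸ csSup_mem_closure hne hbddA))
  obtain ⟨qa, hqa, hqalt⟩ := exists_lt_of_csInf_lt hne hInf_lt
  obtain ⟨qc, hqc, hqcgt⟩ := exists_lt_of_lt_csSup hne hlt_Sup
  obtain ⟨a, ha1, haeq⟩ := hqa
  obtain ⟨c, hc1, hceq⟩ := hqc
  rw [haeq] at hqalt
  rw [hceq] at hqcgt
  have hQalt : Qf a < x := by simp only [hQf]; exact hqalt
  have hQcgt : x < Qf c := by simp only [hQf]; exact hqcgt
  have hup : ∀ n : ℕ, c ≤ n → x < Qf n := by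
    intro n hn
    induction n, hn using Nat.le_induction with
    | base => exact hQcgt
    | succ n hcn ih =>
      have h1n : 1 ≤ n := le_trans hc1 hcn
      have hnot : ¬ Pf n ≤ x := fun hP => hxc (hIcc n h1n x hP (le_of_lt ih))
      calc x < Pf n := not_le.mp hnot
        _ ≤ Qf (n+1) := hPQsucc n
  have hQsc : ∀ j : ℕ, Qf (a * (m+1)^j) = Qf a := by
    intro j
    induction j with
    | zero => simp
    | succ j ihj =>
      have h1 : a * (m+1)^(j+1) = (m+1) * (a * (m+1)^j) := by ring
      rw [h1, hQscale, ihj]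
  have hbig : c ≤ a * (m+1)^c := by
    calc c ≤ 2^c := (Nat.lt_two_pow_self (n := c)).le
      _ ≤ (m+1)^c := Nat.pow_le_pow_left (by omega) c
      _ ≤ a * (m+1)^c := Nat.le_mul_of_pos_left _ (by omega)
  have hfin := hup (a * (m+1)^c) hbig
  rw [hQsc c] at hfin
  linarith
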